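/- Let m ≥ 1 and r ≥ 0 be integers, N := 2^{m+r}, and let a : {0,1}^m × {0,1}^m → ℂ be a unit amplitude vector. Then the matrix M(a) − ξ'(a) ⊗ (I_N / N) is Hermitian and its trace norm is at most 2^{−r+2}. (That is: the quantum channel that attaches r ancilla qubits in state |0⟩ to an m-qubit register and applies a uniformly random permutation of the computational basis of m+r qubits maps every purified input Σ_{x,y} a_{x,y}|x⟩|y⟩ to within trace norm 2^{−r+2} of ξ'(a) ⊗ (I/2^{m+r}), the tensor product of the purification's reduced state with the maximally mixed state.) -/

import Mathlib

open scoped BigOperators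
open Kronecker Matrix

/-- Bit strings of length `m`. -/
abbrev BS (m : ℕ) := Fin m → Bool

/-- `y‖0^r` : the bit string `y` padded with `r` zeros, an element of `{0,1}^{m+r}`. -/
def pad (m r : ℕ) (y : BS m) : BS (m + r) :=
  fun i => if h : (i : ℕ) < m then y ⟨i, h⟩ else false

/-- `ξ'(a)_{x,x'} := Σ_y a_{x,y} · conj(a_{x',y})`. -/
noncomputable def xi' (m : ℕ) (a : BS m → BS m → ℂ) : Matrix (BS m) (BS m) ℂ :=
  Matrix.of fun x x' => ∑ y : BS m, a x y * (starRingEnd ℂ) (a x' y)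

/-- The matrix
`M(a) := (1/N!)·Σ_{π ∈ S({0,1}^{m+r})} Σ_{x,x',y,y'} a_{x,y}·conj(a_{x',y'})·
  (E_{x,x'} ⊗ E_{π(y‖0^r),π(y'‖0^r)})` with `N = 2^{m+r}`. -/
noncomputable def Mmat (m r : ℕ) (a : BS m → BS m → ℂ) :
    Matrix (BS m × BS (m + r)) (BS m × BS (m + r)) ℂ :=
  ((Nat.factorial (2 ^ (m + r)) : ℂ))⁻¹ •
    ∑ π : Equiv.Perm (BS (m + r)), ∑ x : BS m, ∑ x' : BS m, ∑ y : BS m, ∑ y' : BS m,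
      (a x y * (starRingEnd ℂ) (a x' y')) •
        (Matrix.single x x' (1 : ℂ) ⊗ₖ
          Matrix.single (π (pad m r y)) (π (pad m r y')) (1 : ℂ))

/-! ### Auxiliary material -/

section Counting

variable {α : Type*} [Fintype α] [DecidableEq α]

/-- Number of permutations sending `u` to `s` and `v` to `t`. -/
def cnt (u v s t : α) : ℕ :=
  (Finset.univ.filter fun π : Equiv.Perm α => π u = s ∧ π v = t).card

lemma exists_perm_map (s t s' t' : α) (hst : s ≠ t) (hst' : s' ≠ t') :
    ∃ σ : Equiv.Perm α, σ s = s' ∧ σ t = t' := by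
  refine ⟨(Equiv.swap (Equiv.swap s s' t) t') * (Equiv.swap s s'), ?_, ?_⟩
  · have h1 : Equiv.swap s s' t ≠ s' := by
      rcases eq_or_ne s s' with rfl | h
      · simpa [Equiv.swap_self] using hst.symm
      · rcases eq_or_ne t s' with rfl | h2
        · rw [Equiv.swap_apply_right]; exact fun hc => h hc
        · rw [Equiv.swap_apply_of_ne_of_ne hst.symm h2]; exact h2
    simp only [Equiv.Perm.mul_apply, Equiv.swap_apply_left]
    exact Equiv.swap_apply_of_ne_of_ne h1.symm hst'
  · simp [Equiv.Perm.mul_apply, Equiv.swap_apply_left]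

lemma cnt_eq_of_comp (σ : Equiv.Perm α) (u v s t : α) :
    cnt u v s t = cnt u v (σ s) (σ t) := by
  unfold cnt
  apply Finset.card_bij' (fun π _ => σ * π) (fun π _ => σ⁻¹ * π)
  · intro π hπ; simp at hπ ⊢; simp [hπ]
  · intro π hπ; simp at hπ ⊢
    constructor
    · rw [hπ.1]; simp
    · rw [hπ.2]; simp
  · intro π _; simp [← mul_assoc]
  · intro π _; simp [← mul_assoc]

lemma cnt_const (u v s t s' t' : α) (hst : s ≠ t) (hst' : s' ≠ t') :
    cnt u v s t = cnt u v s' t' := by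
  obtain ⟨σ, h1, h2⟩ := exists_perm_map s t s' t' hst hst'
  rw [cnt_eq_of_comp σ u v s t, h1, h2]

lemma cnt_diag_zero (u v s : α) (huv : u ≠ v) : cnt u v s s = 0 := by
  unfold cnt
  rw [Finset.card_eq_zero, Finset.filter_eq_empty_iff]
  rintro π - ⟨h1, h2⟩
  exact huv (π.injective (h1.trans h2.symm))

lemma cnt_refl_offdiag (u s t : α) (hst : s ≠ t) : cnt u u s t = 0 := by
  unfold cnt
  rw [Finset.card_eq_zero, Finset.filter_eq_empty_iff]
  rintro π - ⟨h1, h2⟩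
  exact hst (h1.symm.trans h2)

lemma cnt_sum (u v : α) :
    ∑ p : α × α, cnt u v p.1 p.2 = (Fintype.card α).factorial := by
  calc ∑ p : α × α, cnt u v p.1 p.2
      = ∑ p : α × α, (Finset.univ.filter fun π : Equiv.Perm α => (π u, π v) = p).card := by
        refine Finset.sum_congr rfl fun p _ => ?_
        unfold cnt; congr 1
        exact Finset.filter_congr fun π _ => by simp [Prod.ext_iff]
    _ = (Finset.univ : Finset (Equiv.Perm α)).card :=
        (Finset.card_eq_sum_card_fiberwise (fun _ _ => Finset.mem_univ _)).symm
    _ = (Fintype.card α).factorial := by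
        rw [Finset.card_univ, Fintype.card_perm]

lemma card_diag : ((Finset.univ : Finset (α × α)).filter fun p => p.1 = p.2).card
    = Fintype.card α := by
  rw [← Finset.card_univ]
  apply Finset.card_bij' (fun p _ => p.1) (fun a _ => (a, a)) <;> simp +contextual [eq_comm]

lemma cnt_offdiag_mul (u v s t : α) (huv : u ≠ v) (hst : s ≠ t) :
    (Fintype.card α ^ 2 - Fintype.card α) * cnt u v s t = (Fintype.card α).factorial := by
  have hconst : ∀ p : α × α, cnt u v p.1 p.2 = if p.1 = p.2 then 0 else cnt u v s t := by
    intro p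
    by_cases h : p.1 = p.2
    · simp [h, cnt_diag_zero _ _ _ huv]
    · simp [h, cnt_const u v p.1 p.2 s t h hst]
  have := cnt_sum u v
  rw [Finset.sum_congr rfl fun p _ => hconst p, Finset.sum_ite, Finset.sum_const_zero,
    Finset.sum_const, zero_add, smul_eq_mul] at this
  rw [← this]
  congr 1
  have h2 := Finset.card_filter_add_card_filter_not
    (s := (Finset.univ : Finset (α × α))) (p := fun p => p.1 = p.2)
  rw [card_diag] at h2
  have h3 : (Finset.univ : Finset (α × α)).card = Fintype.card α ^ 2 := by
    simp [Finset.card_univ, sq]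
  omega

lemma cnt_refl_const (u s s' : α) : cnt u u s s = cnt u u s' s' := by
  have h := cnt_eq_of_comp (Equiv.swap s s') u u s s
  simpa [Equiv.swap_apply_left] using h

lemma cnt_refl_diag_mul (u s : α) :
    Fintype.card α * cnt u u s s = (Fintype.card α).factorial := by
  have hconst : ∀ p : α × α, cnt u u p.1 p.2 = if p.1 = p.2 then cnt u u s s else 0 := by
    intro p
    by_cases h : p.1 = p.2
    · rw [if_pos h, ← h]
      exact cnt_refl_const u p.1 s
    · simp [h, cnt_refl_offdiag u p.1 p.2 h]
  have hsum := cnt_sum u u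
  rw [Finset.sum_congr rfl fun p _ => hconst p, Finset.sum_ite, Finset.sum_const_zero,
    Finset.sum_const, add_zero, smul_eq_mul, card_diag] at hsum
  exact hsum

end Counting

open scoped ComplexOrder

section PSD

set_option linter.unusedSectionVars false

variable {n p : Type*} [Fintype n] [DecidableEq n] [Fintype p] [DecidableEq p]

lemma conjTranspose_kron (A : Matrix n n ℂ) (B : Matrix p p ℂ) :
    (A ⊗ₖ B)ᴴ = Aᴴ ⊗ₖ Bᴴ := by
  ext ⟨i, j⟩ ⟨k, l⟩
  simp [Matrix.conjTranspose_apply, Matrix.kroneckerMap_apply, star_mul']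

lemma Matrix.PosSemidef.kron {A : Matrix n n ℂ} {B : Matrix p p ℂ}
    (hA : A.PosSemidef) (hB : B.PosSemidef) : (A ⊗ₖ B).PosSemidef := by
  exact hA.kronecker hB

lemma Matrix.PosSemidef.real_smul {M : Matrix n n ℂ} (hM : M.PosSemidef) {c : ℝ} (hc : 0 ≤ c) :
    ((c : ℂ) • M).PosSemidef := by
  refine Matrix.PosSemidef.of_dotProduct_mulVec_nonneg ?_ ?_
  · rw [Matrix.IsHermitian, Matrix.conjTranspose_smul, hM.isHermitian.eq]
    congr 1
    simp [Complex.star_def, Complex.conj_ofReal]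
  · intro x
    rw [Matrix.smul_mulVec, dotProduct_smul, smul_eq_mul]
    exact mul_nonneg (by exact_mod_cast hc) (hM.dotProduct_mulVec_nonneg x)

/-- all ones matrix -/
def Jmat (β : Type*) : Matrix β β ℂ := Matrix.of fun _ _ => 1

lemma psd_Jmat (β : Type*) [Fintype β] [DecidableEq β] : (Jmat β).PosSemidef := by
  have h : Jmat β = (Matrix.of fun (_ : Unit) (_ : β) => (1 : ℂ))ᴴ *
      (Matrix.of fun (_ : Unit) (_ : β) => (1 : ℂ)) := by
    ext i j
    simp [Jmat, Matrix.mul_apply, Matrix.conjTranspose_apply]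
  rw [h]
  exact Matrix.posSemidef_conjTranspose_mul_self _

lemma psd_card_smul_one_sub_Jmat (β : Type*) [Fintype β] [DecidableEq β] :
    (((Fintype.card β : ℂ)) • (1 : Matrix β β ℂ) - Jmat β).PosSemidef := by
  refine Matrix.PosSemidef.of_dotProduct_mulVec_nonneg ?_ ?_
  · rw [Matrix.IsHermitian, Matrix.conjTranspose_sub, Matrix.conjTranspose_smul]
    congr 1
    · congr 1
      · simp [Complex.star_def]
      · exact Matrix.conjTranspose_one
    · ext i j; simp [Jmat, Matrix.conjTranspose_apply]
  · intro x
    have hexp : dotProduct (star x) ((((Fintype.card β : ℂ)) • (1 : Matrix β β ℂ) - Jmat β) *ᵥ x)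
        = (((Fintype.card β : ℝ) * ∑ i, ‖x i‖ ^ 2 - ‖∑ i, x i‖ ^ 2 : ℝ) : ℂ) := by
      rw [Matrix.sub_mulVec]
      simp only [dotProduct, Pi.sub_apply, Matrix.smul_mulVec, Matrix.one_mulVec,
        Pi.smul_apply, smul_eq_mul, Jmat, Matrix.mulVec, Matrix.of_apply, one_mul]
      have h1 : ∀ i, star x i * ((Fintype.card β : ℂ) * x i - ∑ j, x j)
          = (Fintype.card β : ℂ) * ((starRingEnd ℂ) (x i) * x i) - star x i * ∑ j, x j :=
        fun i => by simp only [Pi.star_apply, Complex.star_def]; ring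
      rw [Finset.sum_congr rfl fun i _ => h1 i, Finset.sum_sub_distrib, ← Finset.mul_sum,
        ← Finset.sum_mul]
      have h2 : ∑ i, (starRingEnd ℂ) (x i) * x i = ((∑ i, ‖x i‖ ^ 2 : ℝ) : ℂ) := by
        push_cast
        exact Finset.sum_congr rfl fun i _ => RCLike.conj_mul (K := ℂ) (x i)
      have h3 : (∑ i, star x i) * (∑ j, x j) = ((‖∑ i, x i‖ ^ 2 : ℝ) : ℂ) := by
        have hst : ∑ i, star x i = (starRingEnd ℂ) (∑ i, x i) := by
          rw [map_sum]; rfl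
        rw [hst, RCLike.conj_mul (K := ℂ)]
        norm_cast
      rw [h2, h3]
      push_cast
      ring
    rw [hexp]
    rw [Complex.zero_le_real]
    have hcs : ‖∑ i, x i‖ ^ 2 ≤ (Fintype.card β : ℝ) * ∑ i, ‖x i‖ ^ 2 := by
      calc ‖∑ i, x i‖ ^ 2 ≤ (∑ i, ‖x i‖) ^ 2 :=
            pow_le_pow_left₀ (norm_nonneg _) (norm_sum_le _ _) 2
        _ ≤ (Finset.univ.card : ℝ) * ∑ i, ‖x i‖ ^ 2 := by
            exact_mod_cast sq_sum_le_card_mul_sum_sq (s := Finset.univ) (f := fun i => ‖x i‖)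
        _ = (Fintype.card β : ℝ) * ∑ i, ‖x i‖ ^ 2 := by rw [Finset.card_univ]
    linarith


lemma psd_diag_re_nonneg {R : Matrix n n ℂ} (hR : R.PosSemidef) (i : n) :
    0 ≤ (R i i).re := by
  have := hR.re_dotProduct_nonneg (Pi.single i 1)
  simpa [dotProduct, mulVec, Pi.single_apply, Finset.sum_ite_eq] using this

lemma traceNorm_le {D P Q : Matrix n n ℂ}
    (hP : P.PosSemidef) (hQ : Q.PosSemidef) (hDPQ : D = P - Q) (hD : D.IsHermitian) :
    ∑ i, |hD.eigenvalues i| ≤ (P.trace).re + (Q.trace).re := by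
  set V : Matrix n n ℂ := (hD.eigenvectorUnitary : Matrix n n ℂ) with hVdef
  have hV1 : Vᴴ * V = 1 := by
    rw [← Matrix.star_eq_conjTranspose, hVdef]
    exact Matrix.mem_unitaryGroup_iff'.mp hD.eigenvectorUnitary.2
  have hV2 : V * Vᴴ = 1 := by
    rw [← Matrix.star_eq_conjTranspose, hVdef]
    exact Matrix.mem_unitaryGroup_iff.mp hD.eigenvectorUnitary.2
  set sg : n → ℂ := fun i => if 0 ≤ hD.eigenvalues i then 1 else -1 with hsg
  set U : Matrix n n ℂ := V * diagonal sg * Vᴴ with hU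
  -- trace of R * U for any R
  have htr : ∀ R : Matrix n n ℂ, (R * U).trace = ∑ i, (Vᴴ * R * V) i i * sg i := by
    intro R
    have h1 : (R * U).trace = ((Vᴴ * R * V) * diagonal sg).trace := by
      rw [hU]
      rw [show R * (V * diagonal sg * Vᴴ) = (R * V * diagonal sg) * Vᴴ by
        simp only [Matrix.mul_assoc]]
      rw [Matrix.trace_mul_cycle]
      simp only [Matrix.mul_assoc]
    rw [h1, Matrix.trace]
    simp [Matrix.diag, Matrix.mul_apply, Matrix.diagonal, Finset.sum_ite_eq]
  -- step 1 : sum of |eigenvalues| equals re trace (D * U)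
  have hDU : ((D * U).trace).re = ∑ i, |hD.eigenvalues i| := by
    have hspec : Vᴴ * D * V = diagonal (RCLike.ofReal ∘ hD.eigenvalues) := by
      rw [← Matrix.star_eq_conjTranspose]
      have := hD.conjStarAlgAut_star_eigenvectorUnitary
      rw [Unitary.conjStarAlgAut_star_apply] at this
      exact this
    rw [htr D, hspec]
    rw [Complex.re_sum]
    refine Finset.sum_congr rfl fun i _ => ?_
    simp only [Matrix.diagonal_apply_eq, Function.comp_apply, hsg]
    by_cases h : 0 ≤ hD.eigenvalues i
    · simp [h, abs_of_nonneg h, RCLike.ofReal]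
    · push_neg at h
      simp [h.not_ge, abs_of_neg h, RCLike.ofReal]
  -- step 3 : PSD bound
  have key : ∀ R : Matrix n n ℂ, R.PosSemidef → |((R * U).trace).re| ≤ (R.trace).re := by
    intro R hR
    have hR' : (Vᴴ * R * V).PosSemidef := hR.conjTranspose_mul_mul_same V
    rw [htr R, Complex.re_sum]
    have habs : ∀ i, |((Vᴴ * R * V) i i * sg i).re| = ((Vᴴ * R * V) i i).re := by
      intro i
      have h0 := psd_diag_re_nonneg hR' i
      by_cases h : 0 ≤ hD.eigenvalues i <;> simp [hsg, h, abs_of_nonneg, h0]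
    calc |∑ i, ((Vᴴ * R * V) i i * sg i).re| ≤ ∑ i, |((Vᴴ * R * V) i i * sg i).re| :=
          Finset.abs_sum_le_sum_abs _ _
      _ = ∑ i, ((Vᴴ * R * V) i i).re := Finset.sum_congr rfl fun i _ => habs i
      _ = ((Vᴴ * R * V).trace).re := by rw [Matrix.trace, Complex.re_sum]; rfl
      _ = (R.trace).re := by
          rw [Matrix.trace_mul_cycle, hV2, Matrix.one_mul]
  -- combine
  have hsplit : ((D * U).trace).re = ((P * U).trace).re - ((Q * U).trace).re := by
    rw [hDPQ, Matrix.sub_mul, Matrix.trace_sub, Complex.sub_re]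
  have := key P hP
  have := key Q hQ
  rw [← hDU, hsplit]
  have h1 : ((P * U).trace).re ≤ (P.trace).re := le_trans (le_abs_self _) (key P hP)
  have h2 : -((Q * U).trace).re ≤ (Q.trace).re := le_trans (neg_le_abs _) (key Q hQ)
  linarith

end PSD

lemma Mmat_apply (m r : ℕ) (a : BS m → BS m → ℂ) (x x' : BS m) (s t : BS (m + r)) :
    Mmat m r a (x, s) (x', t) = ((Nat.factorial (2 ^ (m + r)) : ℂ))⁻¹ *
      ∑ y : BS m, ∑ y' : BS m, (a x y * (starRingEnd ℂ) (a x' y')) *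
        (cnt (pad m r y) (pad m r y') s t : ℂ) := by
  rw [Mmat, Matrix.smul_apply, smul_eq_mul]
  congr 1
  simp only [Matrix.sum_apply, Matrix.smul_apply, Matrix.kroneckerMap_apply, smul_eq_mul,
    Matrix.single, Matrix.of_apply, mul_ite, ite_mul, mul_one, mul_zero, zero_mul,
    ite_and, Finset.sum_ite_eq', Finset.mem_univ, if_true, Finset.sum_ite_irrel,
    Finset.sum_const_zero]
  have hF : ∀ π : Equiv.Perm (BS (m + r)),
      (∑ x2 : BS m, ∑ x3 : BS m, ∑ x4 : BS m,
        if π (pad m r x4) = s then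
          ∑ x5 : BS m, if π (pad m r x5) = t then
            if x2 = x then if x3 = x' then a x2 x4 * (starRingEnd ℂ) (a x3 x5) else 0 else 0
          else 0
        else 0)
      = ∑ y : BS m, ∑ y' : BS m,
          if π (pad m r y) = s ∧ π (pad m r y') = t then
            a x y * (starRingEnd ℂ) (a x' y') else 0 := by
    intro π
    rw [Finset.sum_eq_single x]
    · rw [Finset.sum_eq_single x']
      · refine Finset.sum_congr rfl fun y _ => ?_
        by_cases h1 : π (pad m r y) = s <;>
          simp [h1, Finset.sum_ite_irrel, ite_and]
      · intro b _ hb; simp [hb]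
      · intro h; exact absurd (Finset.mem_univ x') h
    · intro b _ hb; simp [hb]
    · intro h; exact absurd (Finset.mem_univ x) h
  rw [Finset.sum_congr rfl fun π _ => hF π, Finset.sum_comm]
  refine Finset.sum_congr rfl fun y _ => ?_
  rw [Finset.sum_comm]
  refine Finset.sum_congr rfl fun y' _ => ?_
  rw [Finset.sum_ite, Finset.sum_const_zero, add_zero, Finset.sum_const, nsmul_eq_mul, cnt,
    mul_comm]

lemma pad_injective (m r : ℕ) : Function.Injective (pad m r) := by
  intro y y' h
  funext i
  have := congrFun h ⟨(i : ℕ), lt_of_lt_of_le i.2 (Nat.le_add_right m r)⟩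
  simpa [pad, i.2] using this

/-- `ξ(a)_{x,x'} = (Σ_y a_{x,y})·conj(Σ_y a_{x',y})`. -/
noncomputable def xi (m : ℕ) (a : BS m → BS m → ℂ) : Matrix (BS m) (BS m) ℂ :=
  Matrix.of fun x x' => (∑ y : BS m, a x y) * (starRingEnd ℂ) (∑ y : BS m, a x' y)

lemma psd_xi (m : ℕ) (a : BS m → BS m → ℂ) : (xi m a).PosSemidef := by
  have h : xi m a = (Matrix.of fun (_ : Unit) (x : BS m) =>
      (starRingEnd ℂ) (∑ y : BS m, a x y))ᴴ *
      (Matrix.of fun (_ : Unit) (x : BS m) => (starRingEnd ℂ) (∑ y : BS m, a x y)) := by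
    ext x x'
    simp [xi, Matrix.mul_apply, Matrix.conjTranspose_apply, mul_comm]
  rw [h]
  exact Matrix.posSemidef_conjTranspose_mul_self _

lemma psd_xi' (m : ℕ) (a : BS m → BS m → ℂ) : (xi' m a).PosSemidef := by
  have h : xi' m a = (Matrix.of a) * (Matrix.of a)ᴴ := by
    ext x x'
    simp [xi', Matrix.mul_apply, Matrix.conjTranspose_apply]
  rw [h]
  exact Matrix.posSemidef_self_mul_conjTranspose _

set_option maxHeartbeats 1000000 in
lemma key_identity (m r : ℕ) (hm : 1 ≤ m) (a : BS m → BS m → ℂ) :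
    Mmat m r a -
        xi' m a ⊗ₖ (((2 : ℂ) ^ (m + r))⁻¹ • (1 : Matrix (BS (m + r)) (BS (m + r)) ℂ))
      = (xi m a - xi' m a) ⊗ₖ
          ((((2 : ℂ) ^ (m + r)) * ((2 : ℂ) ^ (m + r) - 1))⁻¹ • (Jmat (BS (m + r)) - 1)) := by
  have hcard : Fintype.card (BS (m + r)) = 2 ^ (m + r) := by
    simp [Fintype.card_fun]
  have hfac0 : ((Nat.factorial (2 ^ (m + r)) : ℂ)) ≠ 0 :=
    Nat.cast_ne_zero.mpr (Nat.factorial_ne_zero _)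
  have hNc0 : ((2 : ℂ) ^ (m + r)) ≠ 0 := pow_ne_zero _ two_ne_zero
  have hNc1 : ((2 : ℂ) ^ (m + r)) - 1 ≠ 0 := by
    have h2 : (2:ℕ) ≤ 2 ^ (m + r) := by
      calc (2:ℕ) = 2 ^ 1 := (pow_one 2).symm
        _ ≤ 2 ^ (m + r) := Nat.pow_le_pow_right (by norm_num) (by omega)
    rw [sub_ne_zero]
    intro hc
    have : ((2 ^ (m + r) : ℕ) : ℂ) = ((1 : ℕ) : ℂ) := by push_cast; exact hc
    have := Nat.cast_injective (R := ℂ) this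
    omega
  have hNN : ((2 : ℂ) ^ (m + r)) ^ 2 - (2 : ℂ) ^ (m + r) ≠ 0 := by
    have h : ((2 : ℂ) ^ (m + r)) ^ 2 - (2 : ℂ) ^ (m + r)
        = ((2 : ℂ) ^ (m + r)) * (((2 : ℂ) ^ (m + r)) - 1) := by ring
    rw [h]
    exact mul_ne_zero hNc0 hNc1
  -- cast versions of the counting identities
  have hc1 : ∀ (u s : BS (m + r)), (cnt u u s s : ℂ)
      = ((Nat.factorial (2 ^ (m + r)) : ℂ)) / ((2 : ℂ) ^ (m + r)) := by
    intro u s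
    have h := cnt_refl_diag_mul u s
    rw [hcard] at h
    have h2 : ((2 : ℂ) ^ (m + r)) * (cnt u u s s : ℂ)
        = ((Nat.factorial (2 ^ (m + r)) : ℂ)) := by exact_mod_cast congrArg (Nat.cast (R := ℂ)) h
    field_simp
    linear_combination h2
  have hc2 : ∀ (u v s t : BS (m + r)), u ≠ v → s ≠ t → (cnt u v s t : ℂ)
      = ((Nat.factorial (2 ^ (m + r)) : ℂ)) / (((2 : ℂ) ^ (m + r)) ^ 2 - (2 : ℂ) ^ (m + r)) := by
    intro u v s t huv hst
    have h := cnt_offdiag_mul u v s t huv hst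
    rw [hcard] at h
    have hle : 2 ^ (m + r) ≤ (2 ^ (m + r)) ^ 2 := Nat.le_self_pow (by norm_num) _
    have h2 : (((2 : ℂ) ^ (m + r)) ^ 2 - (2 : ℂ) ^ (m + r)) * (cnt u v s t : ℂ)
        = ((Nat.factorial (2 ^ (m + r)) : ℂ)) := by
      have := congrArg (Nat.cast (R := ℂ)) h
      push_cast [Nat.cast_sub hle] at this
      push_cast
      linear_combination this
    field_simp
    linear_combination h2
  ext ⟨x, s⟩ ⟨x', t⟩
  rw [Matrix.sub_apply, Mmat_apply]
  simp only [Matrix.kroneckerMap_apply, Matrix.smul_apply, Matrix.sub_apply, smul_eq_mul,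
    xi, xi', Matrix.of_apply, Jmat]
  by_cases hst : s = t
  · subst hst
    have hterm : ∀ y y' : BS m, (a x y * (starRingEnd ℂ) (a x' y')) *
          (cnt (pad m r y) (pad m r y') s s : ℂ)
        = if y' = y then (a x y * (starRingEnd ℂ) (a x' y')) *
            (((Nat.factorial (2 ^ (m + r)) : ℂ)) / ((2 : ℂ) ^ (m + r))) else 0 := by
      intro y y'
      by_cases h : y' = y
      · subst h
        rw [if_pos rfl, hc1]
      · rw [if_neg h, cnt_diag_zero _ _ _ (fun hc => h (pad_injective m r hc).symm)]
        simp
    rw [Finset.sum_congr rfl fun y _ => Finset.sum_congr rfl fun y' _ => hterm y y']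
    simp only [Finset.sum_ite_eq', Finset.mem_univ, if_true, Matrix.one_apply_eq]
    rw [← Finset.sum_mul]
    field_simp
    ring
  · have hterm : ∀ y y' : BS m, (a x y * (starRingEnd ℂ) (a x' y')) *
          (cnt (pad m r y) (pad m r y') s t : ℂ)
        = (a x y * (starRingEnd ℂ) (a x' y')) *
            (((Nat.factorial (2 ^ (m + r)) : ℂ)) / (((2 : ℂ) ^ (m + r)) ^ 2 - (2 : ℂ) ^ (m + r)))
          - (if y' = y then (a x y * (starRingEnd ℂ) (a x' y')) *
            (((Nat.factorial (2 ^ (m + r)) : ℂ)) / (((2 : ℂ) ^ (m + r)) ^ 2 - (2 : ℂ) ^ (m + r)))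
            else 0) := by
      intro y y'
      by_cases h : y' = y
      · subst h
        rw [if_pos rfl, cnt_refl_offdiag _ _ _ hst, sub_self, Nat.cast_zero, mul_zero]
      · rw [if_neg h, sub_zero,
          hc2 _ _ _ _ (fun hc => h (pad_injective m r hc.symm)) hst]
    rw [Finset.sum_congr rfl fun y _ => Finset.sum_congr rfl fun y' _ => hterm y y']
    simp only [Finset.sum_sub_distrib, Finset.sum_ite_eq', Finset.mem_univ, if_true]
    rw [Matrix.one_apply_ne hst]
    have hprod : ∑ y : BS m, ∑ y' : BS m, (a x y * (starRingEnd ℂ) (a x' y')) *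
          (((Nat.factorial (2 ^ (m + r)) : ℂ)) / (((2 : ℂ) ^ (m + r)) ^ 2 - (2 : ℂ) ^ (m + r)))
        = ((∑ y : BS m, a x y) * (starRingEnd ℂ) (∑ y : BS m, a x' y)) *
          (((Nat.factorial (2 ^ (m + r)) : ℂ)) / (((2 : ℂ) ^ (m + r)) ^ 2 - (2 : ℂ) ^ (m + r))) := by
      rw [map_sum, Finset.sum_mul_sum, Finset.sum_mul]
      exact Finset.sum_congr rfl fun y _ => (Finset.sum_mul ..).symm
    rw [hprod, ← Finset.sum_mul]
    field_simp
    ring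

set_option maxHeartbeats 1000000 in
/-- The random-permutation padding channel maps every purified input to within trace norm
`2^{-r+2}` of (reduced state) ⊗ (maximally mixed state). -/
theorem statement0 (m r : ℕ) (hm : 1 ≤ m) (a : BS m → BS m → ℂ)
    (ha : ∑ x : BS m, ∑ y : BS m, ‖a x y‖ ^ 2 = 1) :
    ∃ h : (Mmat m r a -
        xi' m a ⊗ₖ (((2 : ℂ) ^ (m + r))⁻¹ • (1 : Matrix (BS (m + r)) (BS (m + r)) ℂ))).IsHermitian,
      ∑ p : BS m × BS (m + r), |h.eigenvalues p| ≤ 4 / 2 ^ r := by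
  have hcard : Fintype.card (BS (m + r)) = 2 ^ (m + r) := by simp [Fintype.card_fun]
  have hcardm : Fintype.card (BS m) = 2 ^ m := by simp [Fintype.card_fun]
  have hNc0 : ((2 : ℂ) ^ (m + r)) ≠ 0 := pow_ne_zero _ two_ne_zero
  have h2N : (2 : ℕ) ≤ 2 ^ (m + r) := by
    calc (2 : ℕ) = 2 ^ 1 := (pow_one 2).symm
      _ ≤ 2 ^ (m + r) := Nat.pow_le_pow_right (by norm_num) (by omega)
  have hNc1 : ((2 : ℂ) ^ (m + r)) - 1 ≠ 0 := by
    rw [sub_ne_zero]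
    intro hc
    have h' : ((2 ^ (m + r) : ℕ) : ℂ) = ((1 : ℕ) : ℂ) := by push_cast; exact hc
    have := Nat.cast_injective (R := ℂ) h'
    omega
  set β := BS (m + r)
  set Nc : ℂ := (2 : ℂ) ^ (m + r) with hNcdef
  set KP : Matrix β β ℂ := (Nc ^ 2)⁻¹ • Jmat β with hKPdef
  set KM : Matrix β β ℂ := (Nc ^ 2 * (Nc - 1))⁻¹ • (Nc • (1 : Matrix β β ℂ) - Jmat β) with hKMdef
  set P : Matrix (BS m × β) (BS m × β) ℂ := xi m a ⊗ₖ KP + xi' m a ⊗ₖ KM with hPdef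
  set Q : Matrix (BS m × β) (BS m × β) ℂ := xi m a ⊗ₖ KM + xi' m a ⊗ₖ KP with hQdef
  have hsplit : (xi m a - xi' m a) ⊗ₖ ((Nc * (Nc - 1))⁻¹ • (Jmat β - 1)) = P - Q := by
    ext ⟨x, s⟩ ⟨x', t⟩
    simp only [hPdef, hQdef, hKPdef, hKMdef, Matrix.kroneckerMap_apply, Matrix.smul_apply,
      Matrix.sub_apply, Matrix.add_apply, smul_eq_mul, Jmat, Matrix.of_apply, Matrix.one_apply]
    by_cases hst : s = t <;> simp only [hst, if_true, if_false] <;> field_simp <;> ring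
  have hone_le : (1 : ℝ) ≤ 2 ^ (m + r) := by
    have h1 : (1 : ℕ) ≤ 2 ^ (m + r) := Nat.one_le_two_pow
    exact_mod_cast h1
  have hpsd_KP : KP.PosSemidef := by
    have h := (psd_Jmat β).real_smul (c := (((2 : ℝ) ^ (m + r)) ^ 2)⁻¹) (by positivity)
    have hsc : (((((2 : ℝ) ^ (m + r)) ^ 2)⁻¹ : ℝ) : ℂ) = (Nc ^ 2)⁻¹ := by
      rw [hNcdef]; push_cast; ring
    rwa [hsc] at h
  have hpsd_KM : KM.PosSemidef := by
    have h0 := psd_card_smul_one_sub_Jmat β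
    have hcc : ((Fintype.card β : ℂ)) = Nc := by rw [hcard, hNcdef]; push_cast; ring
    rw [hcc] at h0
    have h := h0.real_smul (c := (((2 : ℝ) ^ (m + r)) ^ 2 * ((2 : ℝ) ^ (m + r) - 1))⁻¹)
      (by
        apply inv_nonneg.mpr
        apply mul_nonneg (by positivity)
        linarith)
    have hsc : ((((((2 : ℝ) ^ (m + r)) ^ 2 * ((2 : ℝ) ^ (m + r) - 1))⁻¹ : ℝ)) : ℂ)
        = (Nc ^ 2 * (Nc - 1))⁻¹ := by
      rw [hNcdef]; push_cast; ring
    rwa [hsc] at h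
  have hP : P.PosSemidef := ((psd_xi m a).kron hpsd_KP).add ((psd_xi' m a).kron hpsd_KM)
  have hQ : Q.PosSemidef := ((psd_xi m a).kron hpsd_KM).add ((psd_xi' m a).kron hpsd_KP)
  have hDPQ : Mmat m r a - xi' m a ⊗ₖ (((2 : ℂ) ^ (m + r))⁻¹ • (1 : Matrix β β ℂ)) = P - Q :=
    (key_identity m r hm a).trans hsplit
  have hD : (Mmat m r a -
      xi' m a ⊗ₖ (((2 : ℂ) ^ (m + r))⁻¹ • (1 : Matrix β β ℂ))).IsHermitian := by
    rw [hDPQ]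
    exact hP.isHermitian.sub hQ.isHermitian
  refine ⟨hD, ?_⟩
  have hb := traceNorm_le hP hQ hDPQ hD
  -- compute traces
  set Tξ : ℝ := ∑ x : BS m, ‖∑ y : BS m, a x y‖ ^ 2 with hTdef
  have htr_xi : (xi m a).trace = ((Tξ : ℝ) : ℂ) := by
    rw [Matrix.trace, hTdef]
    push_cast
    refine Finset.sum_congr rfl fun x _ => ?_
    simp only [Matrix.diag, xi, Matrix.of_apply]
    exact RCLike.mul_conj (K := ℂ) _
  have htr_xi' : (xi' m a).trace = ((1 : ℝ) : ℂ) := by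
    rw [Matrix.trace, ← ha]
    push_cast
    refine Finset.sum_congr rfl fun x _ => ?_
    simp only [Matrix.diag, xi', Matrix.of_apply]
    push_cast
    refine Finset.sum_congr rfl fun y _ => ?_
    exact RCLike.mul_conj (K := ℂ) _
  have htr_J : (Jmat β).trace = Nc := by
    have h : (Jmat β).trace = (Fintype.card β : ℂ) := by
      simp [Matrix.trace, Matrix.diag, Jmat]
    rw [h, hcard, hNcdef]
    push_cast
    ring
  have htr_KP : KP.trace = Nc⁻¹ := by
    rw [hKPdef, Matrix.trace_smul, htr_J, smul_eq_mul]
    field_simp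
  have htr_KM : KM.trace = Nc⁻¹ := by
    rw [hKMdef, Matrix.trace_smul, Matrix.trace_sub, Matrix.trace_smul, Matrix.trace_one,
      htr_J, hcard]
    have hcc : ((2 ^ (m + r) : ℕ) : ℂ) = Nc := by rw [hNcdef]; push_cast; ring
    rw [hcc, smul_eq_mul, smul_eq_mul]
    field_simp
  have htrP : P.trace = (((Tξ + 1) * ((2 : ℝ) ^ (m + r))⁻¹ : ℝ) : ℂ) := by
    rw [hPdef, Matrix.trace_add, Matrix.trace_kronecker, Matrix.trace_kronecker,
      htr_xi, htr_xi', htr_KP, htr_KM, hNcdef]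
    push_cast
    ring
  have htrQ : Q.trace = (((Tξ + 1) * ((2 : ℝ) ^ (m + r))⁻¹ : ℝ) : ℂ) := by
    rw [hQdef, Matrix.trace_add, Matrix.trace_kronecker, Matrix.trace_kronecker,
      htr_xi, htr_xi', htr_KP, htr_KM, hNcdef]
    push_cast
    ring
  rw [htrP, htrQ, Complex.ofReal_re] at hb
  -- bound Tξ
  have hT : Tξ ≤ 2 ^ m := by
    have hrow : ∀ x : BS m, ‖∑ y : BS m, a x y‖ ^ 2 ≤ (2 : ℝ) ^ m * ∑ y : BS m, ‖a x y‖ ^ 2 := by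
      intro x
      calc ‖∑ y : BS m, a x y‖ ^ 2 ≤ (∑ y : BS m, ‖a x y‖) ^ 2 := by
            have := norm_sum_le Finset.univ (fun y => a x y)
            exact pow_le_pow_left₀ (norm_nonneg _) this 2
        _ ≤ (Finset.univ.card : ℝ) * ∑ y : BS m, ‖a x y‖ ^ 2 := by
            exact_mod_cast sq_sum_le_card_mul_sum_sq (s := Finset.univ) (f := fun y => ‖a x y‖)
        _ = (2 : ℝ) ^ m * ∑ y : BS m, ‖a x y‖ ^ 2 := by
            rw [Finset.card_univ, hcardm]; push_cast; ring
    calc Tξ ≤ ∑ x : BS m, (2 : ℝ) ^ m * ∑ y : BS m, ‖a x y‖ ^ 2 :=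
          Finset.sum_le_sum fun x _ => hrow x
      _ = (2 : ℝ) ^ m * ∑ x : BS m, ∑ y : BS m, ‖a x y‖ ^ 2 := by rw [Finset.mul_sum]
      _ = 2 ^ m := by rw [ha, mul_one]
  have hTnn : 0 ≤ Tξ := Finset.sum_nonneg fun x _ => sq_nonneg _
  calc ∑ p : BS m × β, |hD.eigenvalues p| ≤
        (Tξ + 1) * ((2 : ℝ) ^ (m + r))⁻¹ + (Tξ + 1) * ((2 : ℝ) ^ (m + r))⁻¹ := hb
    _ ≤ (2 ^ m + 1) * ((2 : ℝ) ^ (m + r))⁻¹ + (2 ^ m + 1) * ((2 : ℝ) ^ (m + r))⁻¹ := by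
        have hpos : (0 : ℝ) < ((2 : ℝ) ^ (m + r))⁻¹ := by positivity
        have := add_le_add (mul_le_mul_of_nonneg_right (by linarith : Tξ + 1 ≤ 2 ^ m + 1)
          hpos.le) (mul_le_mul_of_nonneg_right (by linarith : Tξ + 1 ≤ 2 ^ m + 1) hpos.le)
        exact this
    _ ≤ 4 / 2 ^ r := by
        rw [pow_add]
        have hpm : (0 : ℝ) < 2 ^ m := by positivity
        have hkey : ((2 : ℝ) ^ m + 1) * ((2 : ℝ) ^ m * 2 ^ r)⁻¹ ≤ 2 * ((2 : ℝ) ^ r)⁻¹ := by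
          rw [mul_inv, ← mul_assoc]
          have h1 : ((2 : ℝ) ^ m + 1) * ((2 : ℝ) ^ m)⁻¹ ≤ 2 := by
            rw [← div_eq_mul_inv, div_le_iff₀ hpm]
            have h2m : (1 : ℝ) ≤ 2 ^ m := one_le_pow₀ one_le_two
            linarith
          exact mul_le_mul_of_nonneg_right h1 (by positivity)
        have hfin : 4 / (2 : ℝ) ^ r = 2 * ((2 : ℝ) ^ r)⁻¹ + 2 * ((2 : ℝ) ^ r)⁻¹ := by
          rw [div_eq_mul_inv]; ring
        rw [hfin]
        exact add_le_add hkey hkey
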